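/- For every n ≥ 1 and every finite nonempty set M ⊆ ℤⁿ with convex hull Δ, there exist coefficients c : M → ℝ and a line L ⊆ ℝⁿ such that every connected component of the complement of the associated tropical hypersurface T is unbounded, L ∩ T is finite, and L ∩ T consists of exactly #(M ∩ ∂Δ) − 1 points, where ∂Δ is the topological frontier of Δ in ℝⁿ. -/

import Mathlib

open MeasureTheory Set


private lemma dotL {n : ℕ} (x : Fin n → ℝ) :
    IsLinearMap ℝ (fun y : Fin n → ℝ => ∑ i, y i * x i) := by
  constructor
  · intro a b; simp [add_mul, Finset.sum_add_distrib]
  · intro c a; simp [Finset.mul_sum, mul_assoc]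

private lemma dotL' {n : ℕ} (x : Fin n → ℝ) :
    IsLinearMap ℝ (fun y : Fin n → ℝ => ∑ i, x i * y i) := by
  constructor
  · intro a b; simp [mul_add, Finset.sum_add_distrib]
  · intro c a; simp only [Pi.smul_apply, smul_eq_mul]
    rw [Finset.mul_sum]; exact Finset.sum_congr rfl fun i _ => by ring

private lemma sumsq_pos {n : ℕ} {x : Fin n → ℝ} (hx : x ≠ 0) : 0 < ∑ i, x i * x i := by
  obtain ⟨i₀, hi₀⟩ := Function.ne_iff.mp hx
  exact Finset.sum_pos' (fun i _ => mul_self_nonneg _)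
    ⟨i₀, Finset.mem_univ _, mul_self_pos.mpr hi₀⟩

private lemma exists_generic {n : ℕ} (hn : 1 ≤ n) (M : Finset (Fin n → ℤ)) :
    ∃ w : Fin n → ℝ, w ≠ 0 ∧ ∀ α ∈ M, ∀ β ∈ M, α ≠ β →
      (∑ i, w i * (α i : ℝ)) ≠ ∑ i, w i * (β i : ℝ) := by
  classical
  set bad : Set (Fin n → ℝ) := {0} ∪ ⋃ p ∈ (↑M.offDiag : Set ((Fin n → ℤ) × (Fin n → ℤ))),
    {w : Fin n → ℝ | ∑ i, w i * ((p.1 i : ℝ) - (p.2 i : ℝ)) = 0} with hbaddef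
  have hbad : volume bad = 0 := by
    refine measure_union_null ?_ ?_
    · have h0 : ({0} : Set (Fin n → ℝ)) = (⊥ : Submodule ℝ (Fin n → ℝ)) := by simp
      rw [h0]
      refine Measure.addHaar_submodule _ _ ?_
      intro hbt
      have : (Pi.single ⟨0, hn⟩ 1 : Fin n → ℝ) ∈ (⊥ : Submodule ℝ (Fin n → ℝ)) := by
        rw [hbt]; trivial
      rw [Submodule.mem_bot] at this
      have := congrFun this ⟨0, hn⟩
      simp at this
    · refine (measure_biUnion_null_iff (M.offDiag).countable_toSet).mpr ?_
      intro p hp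
      obtain ⟨h1, h2, h3⟩ := Finset.mem_offDiag.mp (Finset.mem_coe.mp hp)
      set d : Fin n → ℝ := fun i => (p.1 i : ℝ) - (p.2 i : ℝ) with hddef
      have hd0 : d ≠ 0 := by
        intro h
        apply h3
        funext i
        have := congrFun h i
        simp only [hddef, Pi.zero_apply, sub_eq_zero] at this
        exact_mod_cast this
      set f : (Fin n → ℝ) →ₗ[ℝ] ℝ := IsLinearMap.mk' _ (dotL d) with hfdef
      have hset : {w : Fin n → ℝ | ∑ i, w i * ((p.1 i : ℝ) - (p.2 i : ℝ)) = 0}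
          = (LinearMap.ker f : Set (Fin n → ℝ)) := rfl
      rw [hset]
      refine Measure.addHaar_submodule _ _ ?_
      intro hk
      have hd : d ∈ LinearMap.ker f := by rw [hk]; trivial
      have : f d = 0 := hd
      have : (∑ i, d i * d i) = 0 := this
      exact absurd this (ne_of_gt (sumsq_pos hd0))
  have hne : bad ≠ Set.univ := by
    intro h
    have h2 : (volume : Measure (Fin n → ℝ)) Set.univ = 0 := by rw [← h]; exact hbad
    have h3 : (0 : ENNReal) < volume (Set.univ : Set (Fin n → ℝ)) :=
      isOpen_univ.measure_pos volume Set.univ_nonempty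
    rw [h2] at h3
    exact lt_irrefl _ h3
  obtain ⟨w, hw⟩ := (Set.ne_univ_iff_exists_notMem _).mp hne
  refine ⟨w, ?_, ?_⟩
  · intro h; exact hw (Or.inl (by simp [h]))
  · intro α hα β hβ hab heq
    apply hw
    right
    refine Set.mem_biUnion (x := (α, β))
      (Finset.mem_coe.mpr (Finset.mem_offDiag.mpr ⟨hα, hβ, hab⟩)) ?_
    show (∑ i, w i * ((α i : ℝ) - (β i : ℝ))) = 0
    have : (∑ i, w i * ((α i : ℝ) - (β i : ℝ)))
        = (∑ i, w i * (α i : ℝ)) - ∑ i, w i * (β i : ℝ) := by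
      rw [← Finset.sum_sub_distrib]
      exact Finset.sum_congr rfl fun i _ => by ring
    rw [this, heq, sub_self]


private lemma toVec {n : ℕ} (f : (Fin n → ℝ) →ₗ[ℝ] ℝ) :
    ∃ d : Fin n → ℝ, (d ≠ 0 ∨ f = 0) ∧ ∀ y, f y = ∑ i, d i * y i := by
  refine ⟨fun i => f (fun j => if i = j then 1 else 0), ?_, ?_⟩
  · by_cases hd : (fun i => f (fun j => if i = j then 1 else 0)) = (0 : Fin n → ℝ)
    · right
      apply LinearMap.ext
      intro x
      rw [LinearMap.pi_apply_eq_sum_univ f x]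
      have : ∀ i, f (fun j => if i = j then 1 else 0) = 0 := fun i => congrFun hd i
      simp [this]
    · left; exact hd
  · intro y
    rw [LinearMap.pi_apply_eq_sum_univ f y]
    exact Finset.sum_congr rfl fun i _ => by rw [smul_eq_mul, mul_comm]

private lemma exists_support {n : ℕ} {S : Set (Fin n → ℝ)} (hS : S.Finite) {z : Fin n → ℝ}
    (hzS : z ∈ S) (hfr : z ∈ frontier (convexHull ℝ S)) :
    ∃ d : Fin n → ℝ, d ≠ 0 ∧ ∀ y ∈ S, (∑ i, d i * y i) ≤ ∑ i, d i * z i := by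
  set Δ : Set (Fin n → ℝ) := convexHull ℝ S with hΔdef
  have hconv : Convex ℝ Δ := convex_convexHull ℝ S
  have hsub : S ⊆ Δ := subset_convexHull ℝ S
  by_cases hint : (interior Δ).Nonempty
  · obtain ⟨y₀, hy₀⟩ := hint
    have hz_not : z ∉ interior Δ := hfr.2
    obtain ⟨f, hf⟩ := geometric_hahn_banach_open_point hconv.interior isOpen_interior hz_not
    have key : ∀ y ∈ Δ, f y ≤ f z := by
      intro y hy
      by_contra hlt
      push_neg at hlt
      obtain ⟨t, ht0, ht1, htt⟩ : ∃ t : ℝ, 0 < t ∧ t < 1 ∧ t * (f y - f y₀) < f y - f z := by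
        rcases le_or_gt (f y - f y₀) 0 with h | h
        · exact ⟨1/2, by norm_num, by norm_num, by nlinarith⟩
        · refine ⟨min (1/2) ((f y - f z) / (2 * (f y - f y₀))),
            lt_min (by norm_num) (div_pos (by linarith) (by linarith)), ?_, ?_⟩
          · exact lt_of_le_of_lt (min_le_left _ _) (by norm_num)
          · have h1 : min (1/2) ((f y - f z) / (2 * (f y - f y₀))) * (f y - f y₀)
                ≤ ((f y - f z) / (2 * (f y - f y₀))) * (f y - f y₀) :=
              mul_le_mul_of_nonneg_right (min_le_right _ _) (le_of_lt h)
            have h2 : ((f y - f z) / (2 * (f y - f y₀))) * (f y - f y₀) = (f y - f z) / 2 := by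
              field_simp
            rw [h2] at h1
            linarith
      have hmem : (1 - t) • y + t • y₀ ∈ interior Δ :=
        hconv.combo_closure_interior_mem_interior (subset_closure hy) hy₀
          (by linarith) ht0 (by ring)
      have hval := hf _ hmem
      rw [map_add, _root_.map_smul, _root_.map_smul] at hval
      simp only [smul_eq_mul] at hval
      nlinarith
    obtain ⟨d, hd, hdv⟩ := toVec (f.toLinearMap)
    have hfz : f y₀ < f z := hf y₀ hy₀
    refine ⟨d, ?_, ?_⟩
    · rcases hd with h | h
      · exact h
      · exfalso
        have h1 : f.toLinearMap y₀ = 0 := by rw [h]; rfl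
        have h2 : f.toLinearMap z = 0 := by rw [h]; rfl
        have : f y₀ = f z := by
          show f.toLinearMap y₀ = f.toLinearMap z
          rw [h1, h2]
        linarith
    · intro y hy
      have h1 : f y ≤ f z := key y (hsub hy)
      have h2 : f y = ∑ i, d i * y i := hdv y
      have h3 : f z = ∑ i, d i * z i := hdv z
      rw [← h2, ← h3]
      exact h1
  · have hzΔ : z ∈ Δ := hsub hzS
    have hspan : affineSpan ℝ Δ ≠ ⊤ := by
      intro h
      exact hint (hconv.interior_nonempty_iff_affineSpan_eq_top.mpr h)
    have hdir : (affineSpan ℝ Δ).direction ≠ ⊤ := by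
      intro h
      exact hspan ((AffineSubspace.direction_eq_top_iff_of_nonempty
        ⟨z, subset_affineSpan ℝ Δ hzΔ⟩).mp h)
    obtain ⟨f, hf0, hfmap⟩ := Submodule.exists_dual_map_eq_bot_of_lt_top
      (lt_top_iff_ne_top.mpr hdir) inferInstance
    have hker : ∀ v ∈ (affineSpan ℝ Δ).direction, f v = 0 := by
      intro v hv
      have : f v ∈ Submodule.map f (affineSpan ℝ Δ).direction := Submodule.mem_map_of_mem hv
      rw [hfmap] at this
      simpa using this
    obtain ⟨d, hd, hdv⟩ := toVec f
    refine ⟨d, ?_, ?_⟩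
    · rcases hd with h | h
      · exact h
      · exact absurd h hf0
    · intro y hy
      have hv : y - z ∈ (affineSpan ℝ Δ).direction := by
        have := AffineSubspace.vsub_mem_direction
          (subset_affineSpan ℝ Δ (hsub hy)) (subset_affineSpan ℝ Δ hzΔ)
        simpa [vsub_eq_sub] using this
      have h0 : f (y - z) = 0 := hker _ hv
      rw [map_sub] at h0
      have h1 := hdv y
      have h2 := hdv z
      have : f y = f z := by linarith
      rw [← h1, ← h2, this]


private def adjSet (F : Finset ℝ) : Set ℝ :=
  {t : ℝ | ∃ a ∈ F, ∃ b ∈ F, a < b ∧ t = a + b ∧ ∀ c ∈ F, c ≤ a ∨ b ≤ c}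

private lemma adjSet_eq (F : Finset ℝ) (hF : F.Nonempty) :
    adjSet F = (fun a => a + sInf {b : ℝ | b ∈ F ∧ a < b}) '' ↑(F.erase (F.max' hF)) := by
  ext t
  constructor
  · rintro ⟨a, haF, b, hbF, hab, rfl, hgap⟩
    have hane : a ≠ F.max' hF := fun h => absurd (F.le_max' b hbF) (not_le.mpr (h ▸ hab))
    refine ⟨a, Finset.mem_coe.mpr (Finset.mem_erase.mpr ⟨hane, haF⟩), ?_⟩
    have hbmem : b ∈ {b' : ℝ | b' ∈ F ∧ a < b'} := ⟨hbF, hab⟩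
    have hfin : {b' : ℝ | b' ∈ F ∧ a < b'}.Finite :=
      F.finite_toSet.subset fun x hx => hx.1
    have hlb : ∀ x ∈ {b' : ℝ | b' ∈ F ∧ a < b'}, b ≤ x := by
      rintro x ⟨hxF, hax⟩
      rcases hgap x hxF with h | h
      · exact absurd hax (not_lt.mpr h)
      · exact h
    have : sInf {b' : ℝ | b' ∈ F ∧ a < b'} = b :=
      le_antisymm (csInf_le hfin.bddBelow hbmem) (le_csInf ⟨b, hbmem⟩ hlb)
    simp only []
    rw [this]
  · rintro ⟨a, haE, rfl⟩
    obtain ⟨hane, haF⟩ := Finset.mem_erase.mp (Finset.mem_coe.mp haE)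
    have hamax : a < F.max' hF := lt_of_le_of_ne (F.le_max' a haF) hane
    have hne : {b' : ℝ | b' ∈ F ∧ a < b'}.Nonempty := ⟨F.max' hF, F.max'_mem hF, hamax⟩
    have hfin : {b' : ℝ | b' ∈ F ∧ a < b'}.Finite :=
      F.finite_toSet.subset fun x hx => hx.1
    have hmem : sInf {b' : ℝ | b' ∈ F ∧ a < b'} ∈ {b' : ℝ | b' ∈ F ∧ a < b'} :=
      hne.csInf_mem hfin
    refine ⟨a, haF, sInf {b' : ℝ | b' ∈ F ∧ a < b'}, hmem.1, hmem.2, rfl, ?_⟩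
    intro c hcF
    rcases le_or_gt c a with h | h
    · exact Or.inl h
    · exact Or.inr (csInf_le hfin.bddBelow ⟨hcF, h⟩)

private lemma adjSet_finite (F : Finset ℝ) (hF : F.Nonempty) : (adjSet F).Finite := by
  rw [adjSet_eq F hF]
  exact ((F.erase (F.max' hF)).finite_toSet).image _

private lemma adjSet_ncard (F : Finset ℝ) (hF : F.Nonempty) :
    (adjSet F).ncard = F.card - 1 := by
  rw [adjSet_eq F hF]
  have hmono : StrictMonoOn (fun a => a + sInf {b : ℝ | b ∈ F ∧ a < b})
      ↑(F.erase (F.max' hF)) := by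
    intro a haE a' haE' haa
    obtain ⟨hane, haF⟩ := Finset.mem_erase.mp (Finset.mem_coe.mp haE)
    obtain ⟨hane', haF'⟩ := Finset.mem_erase.mp (Finset.mem_coe.mp haE')
    have hfin : {b' : ℝ | b' ∈ F ∧ a < b'}.Finite :=
      F.finite_toSet.subset fun x hx => hx.1
    have hfin' : {b' : ℝ | b' ∈ F ∧ a' < b'}.Finite :=
      F.finite_toSet.subset fun x hx => hx.1
    have h1 : sInf {b' : ℝ | b' ∈ F ∧ a < b'} ≤ a' :=
      csInf_le hfin.bddBelow ⟨haF', haa⟩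
    have hamax' : a' < F.max' hF := lt_of_le_of_ne (F.le_max' a' haF') hane'
    have hne' : {b' : ℝ | b' ∈ F ∧ a' < b'}.Nonempty := ⟨F.max' hF, F.max'_mem hF, hamax'⟩
    have h2 : a' < sInf {b' : ℝ | b' ∈ F ∧ a' < b'} := (hne'.csInf_mem hfin').2
    simp only
    linarith
  rw [Set.ncard_image_of_injOn hmono.injOn, Set.ncard_coe_finset,
    Finset.card_erase_of_mem (F.max'_mem hF)]

/-- The value of the tropical monomial with exponent `α` and coefficient `c α` at `x`. -/
noncomputable def tropVal (n : ℕ) (c : (Fin n → ℤ) → ℝ) (α : Fin n → ℤ) (x : Fin n → ℝ) : ℝ :=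
  (∑ i, x i * (α i : ℝ)) + c α

/-- The tropical hypersurface associated to the support `M` and coefficients `c`:
the set of points where the maximum of the tropical monomials is attained at least twice. -/
def tropHypersurface (n : ℕ) (M : Finset (Fin n → ℤ)) (c : (Fin n → ℤ) → ℝ) :
    Set (Fin n → ℝ) :=
  {x | ∃ α ∈ M, ∃ β ∈ M, α ≠ β ∧ tropVal n c α x = tropVal n c β x ∧
    ∀ γ ∈ M, tropVal n c γ x ≤ tropVal n c α x}

theorem stmt7 (n : ℕ) (hn : 1 ≤ n) (M : Finset (Fin n → ℤ)) (hM : M.Nonempty) :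
    ∃ c : (Fin n → ℤ) → ℝ, ∃ u v : Fin n → ℝ, v ≠ 0 ∧
      -- every connected component of the complement of `T` is unbounded
      (∀ x ∉ tropHypersurface n M c,
        ¬ Bornology.IsBounded (connectedComponentIn (tropHypersurface n M c)ᶜ x)) ∧
      ((Set.range fun t : ℝ => u + t • v) ∩ tropHypersurface n M c).Finite ∧
      ((Set.range fun t : ℝ => u + t • v) ∩ tropHypersurface n M c).ncard =
        {α : Fin n → ℤ | α ∈ M ∧ (fun i => (α i : ℝ)) ∈
          frontier (convexHull ℝ ((fun (β : Fin n → ℤ) (i : Fin n) => (β i : ℝ)) '' ↑M))}.ncard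
          - 1 := by
  classical
  obtain ⟨w, hw0, hwinj⟩ := exists_generic hn M
  set ι : (Fin n → ℤ) → (Fin n → ℝ) := fun α i => (α i : ℝ) with hιdef
  set Δ : Set (Fin n → ℝ) := convexHull ℝ (ι '' ↑M) with hΔdef
  have hΔclosed : IsClosed Δ := ((M.finite_toSet.image ι).isCompact_convexHull (𝕜 := ℝ)).isClosed
  set s : (Fin n → ℤ) → ℝ := fun α => ∑ i, w i * (α i : ℝ) with hsdef
  have hs_app : ∀ γ : Fin n → ℤ, s γ = ∑ i, w i * (γ i : ℝ) := fun γ => rfl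
  set B : Finset (Fin n → ℤ) := M.filter (fun α => ι α ∈ frontier Δ) with hBdef
  have hBM : ∀ {γ : Fin n → ℤ}, γ ∈ B → γ ∈ M := fun h => Finset.mem_filter.mp h |>.1
  set K : ℝ := 1 + ∑ α ∈ M, (s α)^2 with hKdef
  set c : (Fin n → ℤ) → ℝ := fun α => if ι α ∈ frontier Δ then -(s α)^2 else -K with hcdef
  have htropVal : ∀ (γ : Fin n → ℤ) (x : Fin n → ℝ),
      tropVal n c γ x = (∑ i, x i * (γ i : ℝ)) + c γ := fun γ x => rfl
  have hcB : ∀ β ∈ B, c β = -(s β)^2 := by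
    intro β hβ
    show (if ι β ∈ frontier Δ then -(s β)^2 else -K) = -(s β)^2
    rw [if_pos (Finset.mem_filter.mp hβ).2]
  have hcI : ∀ γ : Fin n → ℤ, γ ∈ M → γ ∉ B → c γ = -K := by
    intro γ hγ hγB
    show (if ι γ ∈ frontier Δ then -(s γ)^2 else -K) = -K
    rw [if_neg (fun h => hγB (Finset.mem_filter.mpr ⟨hγ, h⟩))]
  have hK : ∀ β ∈ M, (s β)^2 < K := by
    intro β hβ
    have h1 : (s β)^2 ≤ ∑ α ∈ M, (s α)^2 :=
      Finset.single_le_sum (fun α _ => sq_nonneg (s α)) hβ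
    rw [hKdef]; linarith
  -- maximizers of a nonzero linear functional over M lie on the frontier
  have hmax_fr : ∀ x : Fin n → ℝ, x ≠ 0 → ∀ β₀ ∈ M,
      (∀ γ ∈ M, (∑ i, x i * (γ i : ℝ)) ≤ ∑ i, x i * (β₀ i : ℝ)) → β₀ ∈ B := by
    intro x hx β₀ hβ₀ hmax
    refine Finset.mem_filter.mpr ⟨hβ₀, ?_⟩
    rw [hΔclosed.frontier_eq]
    refine ⟨subset_convexHull ℝ _ (Set.mem_image_of_mem ι (Finset.mem_coe.mpr hβ₀)), ?_⟩
    intro hintΔ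
    obtain ⟨ε, hε, hball⟩ := Metric.isOpen_iff.mp isOpen_interior _ hintΔ
    have hxnorm : 0 < ‖x‖ := norm_pos_iff.mpr hx
    set q : ℝ := ε / (2 * ‖x‖) with hqdef
    have hq : 0 < q := by positivity
    set y : Fin n → ℝ := ι β₀ + q • x with hydef
    have hy : y ∈ Δ := by
      refine interior_subset (hball ?_)
      rw [Metric.mem_ball, dist_eq_norm]
      have : y - ι β₀ = q • x := by rw [hydef]; abel
      rw [this, norm_smul, Real.norm_eq_abs, abs_of_pos hq]
      have he : q * ‖x‖ = ε / 2 := by rw [hqdef]; field_simp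
      rw [he]; linarith
    have hhalf : Δ ⊆ {z : Fin n → ℝ | (∑ i, x i * z i) ≤ ∑ i, x i * (β₀ i : ℝ)} := by
      refine convexHull_min ?_ (convex_halfSpace_le (dotL' x) _)
      rintro z ⟨γ, hγ, rfl⟩
      exact hmax γ (Finset.mem_coe.mp hγ)
    have h1 := hhalf hy
    have h2 : (∑ i, x i * y i) = (∑ i, x i * (β₀ i : ℝ)) + q * ∑ i, x i * x i := by
      rw [Finset.mul_sum, ← Finset.sum_add_distrib]
      refine Finset.sum_congr rfl fun i _ => ?_
      rw [hydef]
      simp only [Pi.add_apply, Pi.smul_apply, smul_eq_mul, hιdef]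
      ring
    have h3 : 0 < ∑ i, x i * x i := sumsq_pos hx
    have h4 : 0 < q * ∑ i, x i * x i := mul_pos hq h3
    simp only [Set.mem_setOf_eq] at h1
    rw [h2] at h1
    linarith
  have hBne : B.Nonempty := by
    obtain ⟨β₀, hβ₀, hmax⟩ := M.exists_max_image (fun α => ∑ i, w i * (α i : ℝ)) hM
    exact ⟨β₀, hmax_fr w hw0 β₀ hβ₀ hmax⟩
  have hdom : ∀ x : Fin n → ℝ, ∀ γ ∈ M, ∃ β ∈ B,
      (∑ i, x i * (γ i : ℝ)) ≤ ∑ i, x i * (β i : ℝ) := by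
    intro x γ hγ
    by_cases hx : x = 0
    · obtain ⟨β, hβ⟩ := hBne
      exact ⟨β, hβ, by simp [hx]⟩
    · obtain ⟨β₀, hβ₀, hmax⟩ := M.exists_max_image (fun α => ∑ i, x i * (α i : ℝ)) hM
      exact ⟨β₀, hmax_fr x hx β₀ hβ₀ hmax, hmax γ hγ⟩
  have hint : ∀ x : Fin n → ℝ, ∀ γ ∈ M, γ ∉ B →
      ∃ β ∈ B, tropVal n c γ x < tropVal n c β x := by
    intro x γ hγ hγB
    obtain ⟨β, hβ, hle⟩ := hdom x γ hγ
    refine ⟨β, hβ, ?_⟩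
    rw [htropVal, htropVal, hcB β hβ, hcI γ hγ hγB]
    have := hK β (hBM hβ)
    linarith
  set F : Finset ℝ := B.image s with hFdef
  have hsinj : Set.InjOn s ↑B := by
    intro a ha b hb hab2
    by_contra hne
    exact hwinj a (hBM (Finset.mem_coe.mp ha)) b (hBM (Finset.mem_coe.mp hb)) hne hab2
  have hFne : F.Nonempty := hBne.image s
  have hFcard : F.card = B.card := Finset.card_image_of_injOn hsinj
  have hline : ∀ (γ : Fin n → ℤ) (t : ℝ), tropVal n c γ (t • w) = t * s γ + c γ := by
    intro γ t
    rw [htropVal, hs_app]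
    congr 1
    rw [Finset.mul_sum]
    exact Finset.sum_congr rfl fun i _ => by
      simp only [Pi.smul_apply, smul_eq_mul]; ring
  have hBmax : ∀ (a b : ℝ), a ∈ F → b ∈ F → a < b → (∀ cc ∈ F, cc ≤ a ∨ b ≤ cc) →
      ∀ γ ∈ M, tropVal n c γ ((a+b) • w) ≤ (a+b) * a - a^2 := by
    intro a b haF hbF hab hgap γ hγ
    by_cases hγB : γ ∈ B
    · have hsγ : s γ ∈ F := Finset.mem_image_of_mem s hγB
      rw [hline, hcB γ hγB]
      rcases hgap (s γ) hsγ with h | h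
      · nlinarith [mul_nonneg (sub_nonneg.mpr h) (sub_nonneg.mpr (h.trans hab.le))]
      · nlinarith [mul_nonneg (sub_nonneg.mpr (hab.le.trans h)) (sub_nonneg.mpr h)]
    · obtain ⟨β', hβ', hlt⟩ := hint ((a+b) • w) γ hγ hγB
      have hsβ' : s β' ∈ F := Finset.mem_image_of_mem s hβ'
      have h2 : tropVal n c β' ((a+b) • w) ≤ (a+b) * a - a^2 := by
        rw [hline, hcB β' hβ']
        rcases hgap (s β') hsβ' with h | h
        · nlinarith [mul_nonneg (sub_nonneg.mpr h) (sub_nonneg.mpr (h.trans hab.le))]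
        · nlinarith [mul_nonneg (sub_nonneg.mpr (hab.le.trans h)) (sub_nonneg.mpr h)]
      linarith
  have hTiff : ∀ t : ℝ, (t • w) ∈ tropHypersurface n M c ↔ t ∈ adjSet F := by
    intro t
    constructor
    · rintro ⟨a, haM, b, hbM, hab, heq, hmaxx⟩
      have haB : a ∈ B := by
        by_contra h
        obtain ⟨β', hβ', hlt⟩ := hint (t • w) a haM h
        exact absurd (hmaxx β' (hBM hβ')) (not_le.mpr hlt)
      have hbB : b ∈ B := by
        by_contra h
        obtain ⟨β', hβ', hlt⟩ := hint (t • w) b hbM h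
        have h2 := hmaxx β' (hBM hβ')
        rw [heq] at h2
        linarith
      have hsab : s a ≠ s b := hwinj a haM b hbM hab
      rw [hline, hline, hcB a haB, hcB b hbB] at heq
      have hts : t = s a + s b := by
        have h2 : (s a - s b) * t = (s a - s b) * (s a + s b) := by linear_combination heq
        exact mul_left_cancel₀ (sub_ne_zero.mpr hsab) h2
      rcases lt_or_gt_of_ne hsab with hlt | hlt
      · refine ⟨s a, Finset.mem_image_of_mem s haB, s b, Finset.mem_image_of_mem s hbB,
          hlt, hts, ?_⟩
        intro cc hcc
        obtain ⟨γ, hγB, rfl⟩ := Finset.mem_image.mp hcc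
        by_contra hcon
        push_neg at hcon
        obtain ⟨h1, h2⟩ := hcon
        have hm := hmaxx γ (hBM hγB)
        rw [hline, hline, hcB γ hγB, hcB a haB, hts] at hm
        nlinarith [mul_pos (sub_pos.mpr h1) (sub_pos.mpr h2)]
      · refine ⟨s b, Finset.mem_image_of_mem s hbB, s a, Finset.mem_image_of_mem s haB,
          hlt, by rw [hts]; ring, ?_⟩
        intro cc hcc
        obtain ⟨γ, hγB, rfl⟩ := Finset.mem_image.mp hcc
        by_contra hcon
        push_neg at hcon
        obtain ⟨h1, h2⟩ := hcon
        have hm := hmaxx γ (hBM hγB)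
        rw [hline, hline, hcB γ hγB, hcB a haB, hts] at hm
        nlinarith [mul_pos (sub_pos.mpr h1) (sub_pos.mpr h2)]
    · rintro ⟨a, haF, b, hbF, hab, rfl, hgap⟩
      obtain ⟨α, hαB, rfl⟩ := Finset.mem_image.mp haF
      obtain ⟨β, hβB, rfl⟩ := Finset.mem_image.mp hbF
      refine ⟨α, hBM hαB, β, hBM hβB, ?_, ?_, ?_⟩
      · intro h
        rw [h] at hab
        exact lt_irrefl _ hab
      · rw [hline, hline, hcB α hαB, hcB β hβB]
        ring
      · intro γ hγ
        have h1 := hBmax (s α) (s β) haF hbF hab hgap γ hγ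
        have h2 : (s α + s β) * s α - (s α)^2 = tropVal n c α ((s α + s β) • w) := by
          rw [hline, hcB α hαB]; ring
        rw [h2] at h1
        exact h1
  have hLT : (Set.range fun t : ℝ => (0 : Fin n → ℝ) + t • w) ∩ tropHypersurface n M c
      = (fun t : ℝ => t • w) '' adjSet F := by
    ext x
    constructor
    · rintro ⟨⟨t, rfl⟩, hT⟩
      simp only [zero_add] at hT ⊢
      exact ⟨t, (hTiff t).mp hT, rfl⟩
    · rintro ⟨t, ht, rfl⟩
      refine ⟨⟨t, ?_⟩, (hTiff t).mpr ht⟩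
      simp only [zero_add]
  refine ⟨c, 0, w, hw0, ?_, ?_, ?_⟩
  · -- all components of the complement are unbounded
    intro x hxT
    obtain ⟨β, hβM, hβmax⟩ := M.exists_max_image (fun γ => tropVal n c γ x) hM
    have hβB : β ∈ B := by
      by_contra hβB
      obtain ⟨β', hβ', hlt⟩ := hint x β hβM hβB
      exact absurd (hβmax β' (hBM hβ')) (not_le.mpr hlt)
    have hstrict : ∀ γ ∈ M, γ ≠ β → tropVal n c γ x < tropVal n c β x := by
      intro γ hγ hne
      rcases lt_or_eq_of_le (hβmax γ hγ) with h | h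
      · exact h
      · exact absurd ⟨β, hβM, γ, hγ, (Ne.symm hne), h.symm, hβmax⟩ hxT
    set U : Set (Fin n → ℝ) := {y | ∀ γ ∈ M, γ ≠ β → tropVal n c γ y < tropVal n c β y}
      with hUdef
    have hxU : x ∈ U := hstrict
    have hUcomp : U ⊆ (tropHypersurface n M c)ᶜ := by
      intro y hy hyT
      obtain ⟨a, ha, b, hb, hab, heq, hmax2⟩ := hyT
      have haβ : a = β := by
        by_contra h
        exact absurd (hmax2 β hβM) (not_le.mpr (hy a ha h))
      subst haβ
      have h1 := hy b hb (Ne.symm hab)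
      rw [heq] at h1
      exact lt_irrefl _ h1
    have hUconv : Convex ℝ U := by
      have : U = ⋂ γ ∈ (↑(M.erase β) : Set (Fin n → ℤ)),
          {y : Fin n → ℝ | (∑ i, y i * ((γ i : ℝ) - (β i : ℝ))) < c β - c γ} := by
        ext y
        simp only [Set.mem_iInter, Set.mem_setOf_eq, Finset.mem_coe, Finset.mem_erase, hUdef]
        constructor
        · intro h γ hγ
          have h2 := h γ hγ.2 hγ.1
          rw [htropVal, htropVal] at h2
          have h3 : (∑ i, y i * ((γ i : ℝ) - (β i : ℝ)))
              = (∑ i, y i * (γ i : ℝ)) - ∑ i, y i * (β i : ℝ) := by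
            rw [← Finset.sum_sub_distrib]
            exact Finset.sum_congr rfl fun i _ => by ring
          rw [h3]; linarith
        · intro h γ hγ hne
          have h2 := h γ ⟨hne, hγ⟩
          rw [htropVal, htropVal]
          have h3 : (∑ i, y i * ((γ i : ℝ) - (β i : ℝ)))
              = (∑ i, y i * (γ i : ℝ)) - ∑ i, y i * (β i : ℝ) := by
            rw [← Finset.sum_sub_distrib]
            exact Finset.sum_congr rfl fun i _ => by ring
          rw [h3] at h2; linarith
      rw [this]
      exact convex_iInter fun γ => convex_iInter fun _ =>
        convex_halfSpace_lt (by
          constructor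
          · intro a b; simp [add_mul, Finset.sum_add_distrib]
          · intro r a; simp only [Pi.smul_apply, smul_eq_mul]
            rw [Finset.mul_sum]; exact Finset.sum_congr rfl fun i _ => by ring) _
    have hβfr : ι β ∈ frontier Δ := (Finset.mem_filter.mp hβB).2
    obtain ⟨d, hd0, hdsupp⟩ := exists_support (M.finite_toSet.image ι)
      (Set.mem_image_of_mem ι (Finset.mem_coe.mpr hβM)) hβfr
    have hdsup' : ∀ γ ∈ M, (∑ i, d i * (γ i : ℝ)) ≤ ∑ i, d i * (β i : ℝ) :=
      fun γ hγ => hdsupp (ι γ) (Set.mem_image_of_mem ι (Finset.mem_coe.mpr hγ))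
    have hray : ∀ t : ℝ, 0 ≤ t → x + t • d ∈ U := by
      intro t ht
      intro γ hγ hne
      have h1 := hstrict γ hγ hne
      rw [htropVal, htropVal] at h1 ⊢
      have e1 : ∀ (α : Fin n → ℤ), (∑ i, (x + t • d) i * (α i : ℝ))
          = (∑ i, x i * (α i : ℝ)) + t * ∑ i, d i * (α i : ℝ) := by
        intro α
        rw [Finset.mul_sum, ← Finset.sum_add_distrib]
        refine Finset.sum_congr rfl fun i _ => ?_
        simp only [Pi.add_apply, Pi.smul_apply, smul_eq_mul]
        ring
      rw [e1, e1]
      have h2 := mul_le_mul_of_nonneg_left (hdsup' γ hγ) ht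
      linarith
    intro hbdd
    have hUsub : U ⊆ connectedComponentIn (tropHypersurface n M c)ᶜ x :=
      hUconv.isPreconnected.subset_connectedComponentIn hxU hUcomp
    have hUbdd : Bornology.IsBounded U := hbdd.subset hUsub
    obtain ⟨C, hC⟩ := isBounded_iff_forall_norm_le.mp hUbdd
    have hdnorm : 0 < ‖d‖ := norm_pos_iff.mpr hd0
    have hC0 : ‖x‖ ≤ C := hC x hxU
    set t : ℝ := (C + ‖x‖ + 1) / ‖d‖ with htdef
    have hxnorm : 0 ≤ ‖x‖ := norm_nonneg x
    have ht : 0 ≤ t := by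
      rw [htdef]
      exact div_nonneg (by linarith) hdnorm.le
    have hmem := hray t ht
    have hCt := hC _ hmem
    have hlow : t * ‖d‖ - ‖x‖ ≤ ‖x + t • d‖ := by
      have h5 : ‖t • d‖ - ‖x‖ ≤ ‖x + t • d‖ := by
        have := norm_sub_le (x + t • d) x
        simp only [add_sub_cancel_left] at this
        linarith [this]
      rw [norm_smul, Real.norm_eq_abs, abs_of_nonneg ht] at h5
      exact h5
    have htd : t * ‖d‖ = C + ‖x‖ + 1 := by
      rw [htdef]; field_simp
    rw [htd] at hlow
    linarith
  · rw [hLT]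
    exact (adjSet_finite F hFne).image _
  · rw [hLT]
    have hinj : Function.Injective (fun t : ℝ => t • w) := by
      intro t t' h
      by_contra hne
      obtain ⟨i, hi⟩ := Function.ne_iff.mp hw0
      have h2 := congrFun h i
      simp only [Pi.smul_apply, smul_eq_mul] at h2
      exact hne (mul_right_cancel₀ hi h2)
    rw [Set.ncard_image_of_injective _ hinj, adjSet_ncard F hFne, hFcard]
    congr 1
    have hset : {α : Fin n → ℤ | α ∈ M ∧ (fun i => (α i : ℝ)) ∈ frontier Δ}
        = (↑B : Set (Fin n → ℤ)) := by
      ext α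
      constructor
      · rintro ⟨h1, h2⟩
        exact Finset.mem_coe.mpr (Finset.mem_filter.mpr ⟨h1, h2⟩)
      · intro h
        obtain ⟨h1, h2⟩ := Finset.mem_filter.mp (Finset.mem_coe.mp h)
        exact ⟨h1, h2⟩
    rw [hset, Set.ncard_coe_finset]
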